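/- For the 1-form Φ = cos(u¹/u²)((u¹/u²)dx² - dx¹) + u²(dx³ - sin(u¹/u²)dt) on the domain u² ≠ 0, Φ lies in the first derived system of S₀ = span{dx¹ - u¹dt, dx² - u²dt, dx³ - sin(u¹/u²)dt}: Φ ∈ S₀ and dΦ ≡ 0 mod S₀, i.e. dΦ ∧ ω₀¹ ∧ ω₀² ∧ ω₀³ = 0. -/

import Mathlib

noncomputable section

open scoped BigOperators

/-- Coordinates `(t, x¹, x², x³, u¹, u²)` indexed by `0,…,5`. -/
abbrev E6 := Fin 6 → ℝ

def pr6 (i : Fin 6) : E6 →L[ℝ] ℝ := ContinuousLinearMap.proj i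

/-- Exterior derivative of a 1-form evaluated on two vectors. -/
def dOne {E : Type*} [NormedAddCommGroup E] [NormedSpace ℝ E]
    (ω : E → E →L[ℝ] ℝ) (x v w : E) : ℝ :=
  fderiv ℝ ω x v w - fderiv ℝ ω x w v

def ω01 : E6 → E6 →L[ℝ] ℝ := fun x => pr6 1 - x 4 • pr6 0
def ω02 : E6 → E6 →L[ℝ] ℝ := fun x => pr6 2 - x 5 • pr6 0
def ω03 : E6 → E6 →L[ℝ] ℝ := fun x => pr6 3 - Real.sin (x 4 / x 5) • pr6 0

/-- `Φ = cos(u¹/u²)((u¹/u²)dx² - dx¹) + u²(dx³ - sin(u¹/u²)dt)`. -/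
def Φ : E6 → E6 →L[ℝ] ℝ := fun x =>
  Real.cos (x 4 / x 5) • ((x 4 / x 5) • pr6 2 - pr6 1) +
    x 5 • (pr6 3 - Real.sin (x 4 / x 5) • pr6 0)

/-- The 5-form `η ∧ a ∧ b ∧ c` (for a 2-form `η` and 1-forms `a,b,c`)
evaluated on five vectors, up to a nonzero combinatorial factor. -/
def wedge2111 (η : E6 → E6 → E6 → ℝ) (a b c : E6 → E6 →L[ℝ] ℝ)
    (x : E6) (v : Fin 5 → E6) : ℝ :=
  ∑ σ : Equiv.Perm (Fin 5), ((Equiv.Perm.sign σ : ℤ) : ℝ) *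
    η x (v (σ 0)) (v (σ 1)) * a x (v (σ 2)) * b x (v (σ 3)) * c x (v (σ 4))

set_option maxHeartbeats 1000000

/-- An alternating sum over `Perm (Fin 5)` of a product with a repeated factor
vanishes. -/
lemma alt5 (G : Fin 5 → E6 → ℝ) {j k : Fin 5} (hjk : j ≠ k) (hG : G j = G k)
    (v : Fin 5 → E6) :
    ∑ σ : Equiv.Perm (Fin 5), ((Equiv.Perm.sign σ : ℤ) : ℝ) *
      ∏ i, G i (v (σ i)) = 0 := by
  set f : Equiv.Perm (Fin 5) → ℝ :=
    fun σ => ((Equiv.Perm.sign σ : ℤ) : ℝ) * ∏ i, G i (v (σ i)) with hf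
  have hswap : ∀ σ : Equiv.Perm (Fin 5), f (σ * Equiv.swap j k) = -f σ := by
    intro σ
    have hsign : Equiv.Perm.sign (σ * Equiv.swap j k) = -Equiv.Perm.sign σ := by
      rw [Equiv.Perm.sign_mul, Equiv.Perm.sign_swap hjk, mul_neg_one]
    have hprod : ∏ i, G i (v ((σ * Equiv.swap j k) i)) = ∏ i, G i (v (σ i)) := by
      have h1 : ∀ i, G (Equiv.swap j k i) = G i := by
        intro i
        rcases eq_or_ne i j with rfl | hij
        · rw [Equiv.swap_apply_left, hG]
        rcases eq_or_ne i k with rfl | hik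
        · rw [Equiv.swap_apply_right, hG]
        · rw [Equiv.swap_apply_of_ne_of_ne hij hik]
      calc ∏ i, G i (v ((σ * Equiv.swap j k) i))
          = ∏ i, (fun m => G m (v (σ m))) (Equiv.swap j k i) := by
            apply Finset.prod_congr rfl
            intro i _
            simp only [Equiv.Perm.mul_apply, ← h1 i]
        _ = ∏ i, G i (v (σ i)) :=
            Equiv.prod_comp (Equiv.swap j k) (fun m => G m (v (σ m)))
    simp only [hf, hsign, hprod]
    push_cast
    ring
  have h2 : ∑ σ : Equiv.Perm (Fin 5), f σ =
      -∑ σ : Equiv.Perm (Fin 5), f σ := by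
    calc ∑ σ : Equiv.Perm (Fin 5), f σ
        = ∑ σ : Equiv.Perm (Fin 5), f ((Equiv.mulRight (Equiv.swap j k)) σ) :=
          (Equiv.sum_comp (Equiv.mulRight (Equiv.swap j k)) f).symm
      _ = ∑ σ : Equiv.Perm (Fin 5), -f σ := by
          apply Finset.sum_congr rfl; intro σ _
          simpa using hswap σ
      _ = -∑ σ : Equiv.Perm (Fin 5), f σ := Finset.sum_neg_distrib _
  linarith

/-- On the domain `u² ≠ 0`, the form `Φ` lies in the first derived system of
`S₀ = span{ω₀¹, ω₀², ω₀³}`: it is a pointwise linear combination of the `ω₀ⁱ`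
and `dΦ ∧ ω₀¹ ∧ ω₀² ∧ ω₀³ = 0`, i.e. `dΦ ≡ 0 mod S₀`. -/
theorem Phi_in_first_derived_system :
    ∀ x : E6, x 5 ≠ 0 →
      (∃ a b c : ℝ, Φ x = a • ω01 x + b • ω02 x + c • ω03 x) ∧
      (∀ v : Fin 5 → E6,
        wedge2111 (fun x' v' w' => dOne Φ x' v' w') ω01 ω02 ω03 x v = 0) := by
  intro x hx
  constructor
  · refine ⟨-Real.cos (x 4 / x 5), (x 4 / x 5) * Real.cos (x 4 / x 5), x 5, ?_⟩
    ext w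
    simp [Φ, ω01, ω02, ω03, pr6, ContinuousLinearMap.smul_apply, smul_eq_mul,
      ContinuousLinearMap.add_apply, ContinuousLinearMap.sub_apply]
    field_simp
    ring
  · -- the exterior derivative of Φ, expressed modulo S₀
    have h5i : HasFDerivAt (fun y : E6 => (y 5)⁻¹) ((-(x 5 ^ 2)⁻¹) • pr6 5) x :=
      (hasDerivAt_inv hx).comp_hasFDerivAt x (pr6 5).hasFDerivAt
    have hs : HasFDerivAt (fun y : E6 => y 4 / y 5)
        ((x 5)⁻¹ • pr6 4 - (x 4 / (x 5)^2) • pr6 5) x := by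
      have h := (pr6 4).hasFDerivAt.mul h5i
      simp only [div_eq_mul_inv]
      refine h.congr_fderiv ?_
      ext w
      simp [pr6, ContinuousLinearMap.smul_apply, smul_eq_mul]
      field_simp
      ring
    have hcos : HasFDerivAt (fun y : E6 => Real.cos (y 4 / y 5))
        (-Real.sin (x 4 / x 5) • ((x 5)⁻¹ • pr6 4 - (x 4 / (x 5)^2) • pr6 5)) x :=
      hs.cos
    have hsin : HasFDerivAt (fun y : E6 => Real.sin (y 4 / y 5))
        (Real.cos (x 4 / x 5) • ((x 5)⁻¹ • pr6 4 - (x 4 / (x 5)^2) • pr6 5)) x :=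
      hs.sin
    have hΦ : HasFDerivAt Φ _ x :=
      (hcos.smul ((hs.smul (hasFDerivAt_const ((pr6 2 : E6 →L[ℝ] ℝ)) x)).sub
          (hasFDerivAt_const ((pr6 1 : E6 →L[ℝ] ℝ)) x))).add
        ((pr6 5).hasFDerivAt.smul ((hasFDerivAt_const ((pr6 3 : E6 →L[ℝ] ℝ)) x).sub
          (hsin.smul (hasFDerivAt_const ((pr6 0 : E6 →L[ℝ] ℝ)) x))))
    have key : ∀ v w : E6, dOne Φ x v w =
        Real.sin (x 4 / x 5) *
          (((x 5)⁻¹ • pr6 4 - (x 4 / (x 5)^2) • pr6 5 : E6 →L[ℝ] ℝ) v * ω01 x w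
            - ((x 5)⁻¹ • pr6 4 - (x 4 / (x 5)^2) • pr6 5 : E6 →L[ℝ] ℝ) w * ω01 x v)
        + (Real.cos (x 4 / x 5) - (x 4 / x 5) * Real.sin (x 4 / x 5)) *
          (((x 5)⁻¹ • pr6 4 - (x 4 / (x 5)^2) • pr6 5 : E6 →L[ℝ] ℝ) v * ω02 x w
            - ((x 5)⁻¹ • pr6 4 - (x 4 / (x 5)^2) • pr6 5 : E6 →L[ℝ] ℝ) w * ω02 x v)
        + (v 5 * ω03 x w - w 5 * ω03 x v) := by
      intro v w
      rw [dOne, hΦ.fderiv]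
      simp [ω01, ω02, ω03, pr6, ContinuousLinearMap.smul_apply, smul_eq_mul,
        ContinuousLinearMap.add_apply, ContinuousLinearMap.sub_apply,
        ContinuousLinearMap.smulRight_apply]
      field_simp
      ring
    intro v
    -- abbreviations for the 1-forms involved, as plain functions
    set A : E6 → ℝ :=
      fun z => ((x 5)⁻¹ • pr6 4 - (x 4 / (x 5)^2) • pr6 5 : E6 →L[ℝ] ℝ) z with hA
    set B1 : E6 → ℝ := fun z => ω01 x z with hB1
    set B2 : E6 → ℝ := fun z => ω02 x z with hB2
    set B3 : E6 → ℝ := fun z => ω03 x z with hB3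
    set P : E6 → ℝ := fun z => z 5 with hP
    have step : ∀ σ : Equiv.Perm (Fin 5),
        ((Equiv.Perm.sign σ : ℤ) : ℝ) *
          dOne Φ x (v (σ 0)) (v (σ 1)) * ω01 x (v (σ 2)) * ω02 x (v (σ 3)) *
            ω03 x (v (σ 4))
        = Real.sin (x 4 / x 5) * (((Equiv.Perm.sign σ : ℤ) : ℝ) *
            ∏ i, (![A, B1, B1, B2, B3] : Fin 5 → E6 → ℝ) i (v (σ i)))
        - Real.sin (x 4 / x 5) * (((Equiv.Perm.sign σ : ℤ) : ℝ) *
            ∏ i, (![B1, A, B1, B2, B3] : Fin 5 → E6 → ℝ) i (v (σ i)))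
        + (Real.cos (x 4 / x 5) - (x 4 / x 5) * Real.sin (x 4 / x 5)) *
            (((Equiv.Perm.sign σ : ℤ) : ℝ) *
            ∏ i, (![A, B2, B1, B2, B3] : Fin 5 → E6 → ℝ) i (v (σ i)))
        - (Real.cos (x 4 / x 5) - (x 4 / x 5) * Real.sin (x 4 / x 5)) *
            (((Equiv.Perm.sign σ : ℤ) : ℝ) *
            ∏ i, (![B2, A, B1, B2, B3] : Fin 5 → E6 → ℝ) i (v (σ i)))
        + (((Equiv.Perm.sign σ : ℤ) : ℝ) *
            ∏ i, (![P, B3, B1, B2, B3] : Fin 5 → E6 → ℝ) i (v (σ i)))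
        - (((Equiv.Perm.sign σ : ℤ) : ℝ) *
            ∏ i, (![B3, P, B1, B2, B3] : Fin 5 → E6 → ℝ) i (v (σ i))) := by
      intro σ
      rw [key]
      simp only [Fin.prod_univ_five, Matrix.cons_val_zero, Matrix.cons_val_one,
        Matrix.head_cons, Matrix.cons_val_two, Matrix.tail_cons,
        Matrix.cons_val_three, Matrix.cons_val_four, hA, hB1, hB2, hB3, hP]
      ring
    simp only [wedge2111]
    rw [Finset.sum_congr rfl (fun σ _ => step σ)]
    simp only [Finset.sum_add_distrib, Finset.sum_sub_distrib, ← Finset.mul_sum]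
    rw [alt5 ![A, B1, B1, B2, B3] (j := 1) (k := 2) (by decide) rfl v,
      alt5 ![B1, A, B1, B2, B3] (j := 0) (k := 2) (by decide) rfl v,
      alt5 ![A, B2, B1, B2, B3] (j := 1) (k := 3) (by decide) rfl v,
      alt5 ![B2, A, B1, B2, B3] (j := 0) (k := 3) (by decide) rfl v,
      alt5 ![P, B3, B1, B2, B3] (j := 1) (k := 4) (by decide) rfl v,
      alt5 ![B3, P, B1, B2, B3] (j := 0) (k := 4) (by decide) rfl v]
    ring
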